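/- Let {a(n)} denote Stern's diatomic sequence and let φ = (1+√5)/2 be the golden ratio. Then limsup_{n→∞} a(n)/n^{log₂ φ} = φ^{log₂ 3}/√5, where log₂ denotes the base-2 logarithm. -/

import Mathlib

open Real Filter

noncomputable section SternAux

def sPhi : ℝ := (1 + Real.sqrt 5) / 2
def sTh : ℝ := Real.logb 2 sPhi

lemma sS5_sq : Real.sqrt 5 ^ 2 = 5 := Real.sq_sqrt (by norm_num)
lemma sS5_lb : 2.2360 ≤ Real.sqrt 5 := by
  rw [show (2.2360:ℝ) = Real.sqrt (2.2360^2) by rw [Real.sqrt_sq]; norm_num]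
  exact Real.sqrt_le_sqrt (by norm_num)
lemma sS5_ub : Real.sqrt 5 ≤ 2.2361 := by
  rw [show (2.2361:ℝ) = Real.sqrt (2.2361^2) by rw [Real.sqrt_sq]; norm_num]
  exact Real.sqrt_le_sqrt (by norm_num)
lemma sS5_pos : 0 < Real.sqrt 5 := by nlinarith [sS5_lb]
lemma sPhi_lb : 1.618 ≤ sPhi := by unfold sPhi; nlinarith [sS5_lb]
lemma sPhi_ub : sPhi ≤ 1.61805 := by unfold sPhi; nlinarith [sS5_ub]
lemma sPhi_pos : 0 < sPhi := by nlinarith [sPhi_lb]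
lemma sPhi_gt_one : 1 < sPhi := by nlinarith [sPhi_lb]
lemma sPhi_sq : sPhi ^ 2 = sPhi + 1 := by
  unfold sPhi; nlinarith [sS5_sq]
lemma sS5_eq : Real.sqrt 5 = 2 * sPhi - 1 := by unfold sPhi; ring
lemma sPhi_inv : (sPhi - 1) * sPhi = 1 := by nlinarith [sPhi_sq]
lemma sPhi_inv2 : (2 - sPhi) * sPhi ^ 2 = 1 := by nlinarith [sPhi_sq]

lemma two_rpow_sTh : (2:ℝ) ^ sTh = sPhi := by
  unfold sTh; exact Real.rpow_logb (by norm_num) (by norm_num) sPhi_pos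
lemma sTh_pos : 0 < sTh := Real.logb_pos (by norm_num) sPhi_gt_one
lemma sTh_lt_one : sTh < 1 := by
  have h : sTh < Real.logb 2 2 := by
    apply Real.logb_lt_logb (by norm_num) sPhi_pos
    nlinarith [sPhi_ub]
  simpa using h

lemma phi_pow_nat (k : ℕ) : sPhi ^ k = (2:ℝ) ^ ((k:ℝ) * sTh) := by
  rw [show (k:ℝ) * sTh = sTh * k by ring, Real.rpow_mul (by norm_num), two_rpow_sTh,
    Real.rpow_natCast]

lemma four_rpow_sTh : (4:ℝ) ^ sTh = sPhi ^ 2 := by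
  rw [show (4:ℝ) = 2*2 by norm_num, Real.mul_rpow (by norm_num) (by norm_num),
    two_rpow_sTh]
  ring

lemma sTh_ge : 2/3 ≤ sTh := by
  have h4 : (4:ℝ) ≤ sPhi ^ 3 := by nlinarith [sPhi_sq, sPhi_lb]
  by_contra h
  push_neg at h
  have h2 : (2:ℝ) ^ (((3:ℕ):ℝ)*sTh) < 2 ^ (2:ℝ) := by
    apply Real.rpow_lt_rpow_of_exponent_lt (by norm_num); push_cast; linarith
  rw [← phi_pow_nat 3] at h2
  norm_num at h2
  nlinarith [h4, h2]

lemma sTh_le : sTh ≤ 7/10 := by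
  have p4 : sPhi^4 = 3*sPhi+2 := by
    have h : sPhi^4 = (sPhi+1)^2 := by rw [← sPhi_sq]; ring
    nlinarith [sPhi_sq, h]
  have p5 : sPhi^5 = 5*sPhi+3 := by
    have h : sPhi^5 = sPhi^4 * sPhi := by ring
    rw [h, p4]; nlinarith [sPhi_sq]
  have key : sPhi ^ 10 ≤ 128 := by
    have h : sPhi^10 = (sPhi^5)^2 := by ring
    rw [h, p5]; nlinarith [sPhi_sq, sPhi_ub, sPhi_pos]
  by_contra h
  push_neg at h
  have h2 : (2:ℝ) ^ (7:ℝ) < 2 ^ (((10:ℕ):ℝ)*sTh) := by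
    apply Real.rpow_lt_rpow_of_exponent_lt (by norm_num); push_cast; linarith
  rw [← phi_pow_nat 10] at h2
  norm_num at h2
  nlinarith [key, h2]

end SternAux
noncomputable section M2
variable {x y δ p : ℝ}

lemma rpow_anti (hx : 0 < x) (hxy : x ≤ y) (hq : p ≤ 0) : y ^ p ≤ x ^ p := by
  have hy : 0 < y := lt_of_lt_of_le hx hxy
  rw [show p = -(-p) by ring, Real.rpow_neg hy.le, Real.rpow_neg hx.le]
  have h1 : x ^ (-p) ≤ y ^ (-p) := Real.rpow_le_rpow hx.le hxy (by linarith)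
  have h2 : 0 < x ^ (-p) := Real.rpow_pos_of_pos hx _
  exact inv_anti₀ h2 h1

lemma rpow_mvt (ha : 0 < x) (hab : x < y) (hp : p ≠ 0) :
    ∃ c, x < c ∧ c < y ∧ y ^ p - x ^ p = (y - x) * (p * c ^ (p - 1)) := by
  have hcont : ContinuousOn (fun t : ℝ => t ^ p) (Set.Icc x y) := by
    intro t ht
    exact (Real.continuousAt_rpow_const t p (Or.inl (by nlinarith [ht.1]))).continuousWithinAt
  have hderiv : ∀ t ∈ Set.Ioo x y, HasDerivAt (fun t : ℝ => t ^ p) (p * t ^ (p - 1)) t := by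
    intro t ht
    exact Real.hasDerivAt_rpow_const (Or.inl (by nlinarith [ht.1]))
  obtain ⟨c, hc, heq⟩ := exists_hasDerivAt_eq_slope (fun t : ℝ => t ^ p)
    (fun t => p * t ^ (p - 1)) hab hcont hderiv
  refine ⟨c, hc.1, hc.2, ?_⟩
  have hne : y - x ≠ 0 := sub_ne_zero.mpr hab.ne'
  rw [eq_div_iff hne] at heq
  linarith [heq]

lemma mvt_up (hx : 0 < x) (hδ : 0 ≤ δ) :
    (x + δ) ^ sTh ≤ x ^ sTh + sTh * δ * x ^ (sTh - 1) := by
  rcases eq_or_lt_of_le hδ with h | h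
  · rw [← h]; norm_num
  · obtain ⟨c, hc1, _, heq⟩ := rpow_mvt hx (by linarith : x < x + δ) (ne_of_gt sTh_pos)
    have hmono : c ^ (sTh - 1) ≤ x ^ (sTh - 1) :=
      rpow_anti hx hc1.le (by linarith [sTh_lt_one])
    have key : sTh * δ * c ^ (sTh - 1) ≤ sTh * δ * x ^ (sTh - 1) :=
      mul_le_mul_of_nonneg_left hmono (mul_nonneg sTh_pos.le h.le)
    nlinarith [heq]

lemma mvt_lo (hx : 0 < x) (hδ : 0 ≤ δ) :
    x ^ sTh + sTh * δ * (x + δ) ^ (sTh - 1) ≤ (x + δ) ^ sTh := by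
  rcases eq_or_lt_of_le hδ with h | h
  · rw [← h]; norm_num
  · obtain ⟨c, hc1, hc2, heq⟩ := rpow_mvt hx (by linarith : x < x + δ) (ne_of_gt sTh_pos)
    have hmono : (x + δ) ^ (sTh - 1) ≤ c ^ (sTh - 1) :=
      rpow_anti (by linarith) hc2.le (by linarith [sTh_lt_one])
    have key : sTh * δ * (x + δ) ^ (sTh - 1) ≤ sTh * δ * c ^ (sTh - 1) :=
      mul_le_mul_of_nonneg_left hmono (mul_nonneg sTh_pos.le h.le)
    nlinarith [heq]

lemma mvt_neg (hx : 0 < x) (hδ : 0 ≤ δ) :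
    x ^ (-sTh) - (x + δ) ^ (-sTh) ≤ sTh * δ * x ^ (-sTh - 1) := by
  rcases eq_or_lt_of_le hδ with h | h
  · rw [← h]; norm_num
  · obtain ⟨c, hc1, _, heq⟩ := rpow_mvt hx (by linarith : x < x + δ)
      (by nlinarith [sTh_pos] : -sTh ≠ 0)
    have hmono : c ^ (-sTh - 1) ≤ x ^ (-sTh - 1) :=
      rpow_anti hx hc1.le (by nlinarith [sTh_pos])
    have key : sTh * δ * c ^ (-sTh - 1) ≤ sTh * δ * x ^ (-sTh - 1) :=
      mul_le_mul_of_nonneg_left hmono (mul_nonneg sTh_pos.le h.le)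
    nlinarith [heq]

end M2
noncomputable section M3

lemma sPhi_lt_two : sPhi < 2 := by nlinarith [sPhi_ub]

lemma two_rpow_two_sTh : (2:ℝ) ^ (2*sTh) = sPhi^2 := by
  rw [phi_pow_nat 2]; norm_num

lemma inv_phi_sq : (sPhi^2)⁻¹ = 2 - sPhi :=
  inv_eq_of_mul_eq_one_left sPhi_inv2

lemma two_rpow_neg_two_sTh : (2:ℝ) ^ (-(2*sTh)) = 2 - sPhi := by
  rw [Real.rpow_neg (by norm_num), two_rpow_two_sTh, inv_phi_sq]

-- L2 : monotonicity of x^θ - x^{-θ}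
lemma L2 {x y : ℝ} (hx : 0 < x) (hxy : x ≤ y) :
    x ^ sTh - x ^ (-sTh) ≤ y ^ sTh - y ^ (-sTh) := by
  have h1 : x ^ sTh ≤ y ^ sTh := Real.rpow_le_rpow hx.le hxy sTh_pos.le
  have h2 : y ^ (-sTh) ≤ x ^ (-sTh) := rpow_anti hx hxy (by linarith [sTh_pos])
  linarith

-- L1 : gap lemma
lemma L1 {x : ℝ} (hx : 7 ≤ x) : (x+1) ^ sTh ≤ x ^ sTh + (sPhi - 1) := by
  have hx0 : (0:ℝ) < x := by linarith
  have h := mvt_up hx0 (by norm_num : (0:ℝ) ≤ 1)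
  have h2 : x ^ (sTh - 1) ≤ (4:ℝ) ^ (sTh - 1) :=
    rpow_anti (by norm_num) (by linarith) (by linarith [sTh_lt_one])
  have h3 : (4:ℝ) ^ (sTh - 1) = sPhi^2 / 4 := by
    rw [Real.rpow_sub (by norm_num), four_rpow_sTh, Real.rpow_one]
  have h4 : sTh * x ^ (sTh - 1) ≤ (7/10) * (sPhi^2/4) := by
    rw [← h3]
    have hp : (0:ℝ) ≤ x ^ (sTh-1) := (Real.rpow_pos_of_pos hx0 _).le
    have := mul_le_mul sTh_le h2 hp (by norm_num)
    linarith
  have h5 : (7/10) * (sPhi^2/4) ≤ sPhi - 1 := by nlinarith [sPhi_sq, sPhi_lb, sPhi_ub]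
  nlinarith [h]

-- L3 : the key second-order inequality
lemma L3 {t : ℝ} (ht : 0 ≤ t) :
    Real.sqrt 5 * (t+2) ^ sTh + (2-sPhi) * (t+4) ^ sTh - (2-sPhi) * (t+4) ^ (-sTh)
      ≤ (4*t+10) ^ sTh - (4*t+10) ^ (-sTh) := by
  have hx : (0:ℝ) < t + 5/2 := by linarith
  have ht2 : (0:ℝ) < t + 2 := by linarith
  -- budgets
  have e1 : (4*t+10) ^ sTh = sPhi^2 * (t+5/2) ^ sTh := by
    rw [show 4*t+10 = 4*(t+5/2) by ring,
      Real.mul_rpow (by norm_num) (by linarith), four_rpow_sTh]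
  have e2 : (4*t+10) ^ (-sTh) = (2-sPhi) * (t+5/2) ^ (-sTh) := by
    rw [show 4*t+10 = 4*(t+5/2) by ring,
      Real.mul_rpow (by norm_num) (by linarith)]
    congr 1
    rw [show (4:ℝ) = 2^(2:ℕ) by norm_num, ← Real.rpow_natCast 2 2,
      ← Real.rpow_mul (by norm_num)]
    rw [show ((2:ℕ):ℝ) * -sTh = -(2*sTh) by push_cast; ring, two_rpow_neg_two_sTh]
  -- MVT bounds
  have c1 : (t+2) ^ sTh + sTh * (1/2) * (t+5/2) ^ (sTh-1) ≤ (t+5/2) ^ sTh := by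
    have h := mvt_lo ht2 (by norm_num : (0:ℝ) ≤ 1/2)
    rw [show t+2+1/2 = t+5/2 by ring] at h
    exact h
  have c2 : (t+4) ^ sTh ≤ (t+5/2) ^ sTh + sTh * (3/2) * (t+5/2) ^ (sTh-1) := by
    have h := mvt_up hx (by norm_num : (0:ℝ) ≤ 3/2)
    rw [show t+5/2+3/2 = t+4 by ring] at h
    exact h
  have c3 : (t+5/2) ^ (-sTh) - (t+4) ^ (-sTh) ≤ sTh * (3/2) * (t+5/2) ^ (-sTh-1) := by
    have h := mvt_neg hx (by norm_num : (0:ℝ) ≤ 3/2)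
    rw [show t+5/2+3/2 = t+4 by ring] at h
    linarith [h]
  -- c4 : x^{-θ-1} ≤ (2-φ) x^{θ-1}
  have c4 : (t+5/2) ^ (-sTh-1) ≤ (2-sPhi) * (t+5/2) ^ (sTh-1) := by
    have e3 : (t+5/2) ^ (-sTh-1) = (t+5/2) ^ (sTh-1) * (t+5/2) ^ (-(2*sTh)) := by
      rw [← Real.rpow_add hx]; ring_nf
    have e4 : (t+5/2) ^ (-(2*sTh)) ≤ 2 - sPhi := by
      rw [← two_rpow_neg_two_sTh]
      exact rpow_anti (by norm_num) (by linarith) (by nlinarith [sTh_pos])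
    have hp : (0:ℝ) ≤ (t+5/2) ^ (sTh-1) := (Real.rpow_pos_of_pos hx _).le
    calc (t+5/2) ^ (-sTh-1) = (t+5/2) ^ (sTh-1) * (t+5/2) ^ (-(2*sTh)) := e3
      _ ≤ (t+5/2) ^ (sTh-1) * (2-sPhi) := mul_le_mul_of_nonneg_left e4 hp
      _ = (2-sPhi) * (t+5/2) ^ (sTh-1) := by ring
  -- abbreviations
  set x := t + 5/2 with hxdef
  set X := x ^ (sTh-1) with hXdef
  set Y := x ^ (-sTh-1) with hYdef
  have hXnn : (0:ℝ) ≤ X := (Real.rpow_pos_of_pos hx _).le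
  have hs5 : Real.sqrt 5 = 2*sPhi - 1 := sS5_eq
  have hc : (0:ℝ) ≤ 2 - sPhi := by linarith [sPhi_lt_two]
  have hth : (0:ℝ) < sTh := sTh_pos
  -- scaled versions
  have h1 : Real.sqrt 5 * ((t+2)^sTh + sTh * (1/2) * X) ≤ Real.sqrt 5 * x^sTh :=
    mul_le_mul_of_nonneg_left c1 (by rw [hs5]; linarith [sPhi_gt_one])
  have h2 : (2-sPhi) * (t+4)^sTh ≤ (2-sPhi) * (x^sTh + sTh * (3/2) * X) :=
    mul_le_mul_of_nonneg_left c2 hc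
  have h3 : (2-sPhi) * (x^(-sTh) - (t+4)^(-sTh)) ≤ (2-sPhi) * (sTh * (3/2) * Y) :=
    mul_le_mul_of_nonneg_left c3 hc
  have h4 : sTh * Y ≤ sTh * ((2-sPhi) * X) := mul_le_mul_of_nonneg_left c4 hth.le
  -- numeric : 3(2-φ)(3-φ) ≤ 2φ-1, scaled by θX ≥ 0
  have h5 : (3*(2-sPhi)*(3-sPhi)) * (sTh*X) ≤ (2*sPhi-1) * (sTh*X) := by
    apply mul_le_mul_of_nonneg_right _ (mul_nonneg hth.le hXnn)
    nlinarith [sPhi_lb]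
  have h4c : (2-sPhi) * (sTh * Y) ≤ (2-sPhi) * (sTh * ((2-sPhi) * X)) :=
    mul_le_mul_of_nonneg_left h4 hc
  have h5' : (3*(2-sPhi)*(3-sPhi)) * (sTh*X) ≤ Real.sqrt 5 * (sTh*X) := by
    rw [hs5]; exact h5
  have hs5x : Real.sqrt 5 * x^sTh = (2*sPhi - 1) * x^sTh := by rw [hs5]
  have hsqx : sPhi^2 * x^sTh = (sPhi+1) * x^sTh := by rw [sPhi_sq]
  rw [e1, e2]
  nlinarith [h1, h2, h3, h4c, h5', hs5x, hsqx]

end M3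
noncomputable section M4

lemma rpow_double {x : ℝ} (hx : 0 ≤ x) : (2*x) ^ sTh = sPhi * x ^ sTh := by
  rw [Real.mul_rpow (by norm_num) hx, two_rpow_sTh]

lemma rpow_quad {x : ℝ} (hx : 0 ≤ x) : (4*x) ^ sTh = sPhi^2 * x ^ sTh := by
  rw [Real.mul_rpow (by norm_num) hx, four_rpow_sTh]

lemma rpow_quad_neg {x : ℝ} (hx : 0 ≤ x) : (4*x) ^ (-sTh) = (2-sPhi) * x ^ (-sTh) := by
  rw [Real.mul_rpow (by norm_num) hx]
  congr 1
  have h4 : (4:ℝ) = (2:ℝ) ^ ((2:ℕ):ℝ) := by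
    rw [Real.rpow_natCast]; norm_num
  rw [h4, ← Real.rpow_mul (by norm_num)]
  rw [show ((2:ℕ):ℝ) * -sTh = -(2*sTh) by push_cast; ring, two_rpow_neg_two_sTh]

variable {a : ℕ → ℕ}

lemma he' (ha0 : a 0 = 0) (he : ∀ n, 1 ≤ n → a (2*n) = a n) (k : ℕ) : a (2*k) = a k := by
  rcases Nat.eq_zero_or_pos k with rfl | hk
  · norm_num
  · exact he k hk

lemma ho' (ha0 : a 0 = 0) (ha1 : a 1 = 1) (ho : ∀ n, 1 ≤ n → a (2*n+1) = a n + a (n+1))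
    (k : ℕ) : a (2*k+1) = a k + a (k+1) := by
  rcases Nat.eq_zero_or_pos k with rfl | hk
  · simp [ha0, ha1]
  · exact ho k hk

lemma apos (ha0 : a 0 = 0) (ha1 : a 1 = 1) (he : ∀ n, 1 ≤ n → a (2*n) = a n)
    (ho : ∀ n, 1 ≤ n → a (2*n+1) = a n + a (n+1)) : ∀ n, 1 ≤ n → 1 ≤ a n := by
  intro n
  induction n using Nat.strong_induction_on with
  | _ n IH =>
  intro hn
  rcases Nat.even_or_odd n with ⟨m, hm⟩ | ⟨m, hm⟩
  · have hm' : n = 2*m := by omega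
    subst hm'
    have hm1 : 1 ≤ m := by omega
    rw [he m hm1]
    exact IH m (by omega) hm1
  · subst hm
    rw [ho' ha0 ha1 ho m]
    rcases Nat.eq_zero_or_pos m with rfl | hk
    · simp [ha1]
    · have := IH m (by omega) hk
      omega

/-- the combination step used for n ≡ 1 mod 4 -/
lemma combineAC {u v g gi : ℝ} (hA : sPhi*u + v ≤ g) (hC : Real.sqrt 5 * u ≤ g - gi) :
    Real.sqrt 5 * (2*u+v) ≤ sPhi^2 * g - (2-sPhi) * gi := by
  have hc : (0:ℝ) ≤ 2 - sPhi := by linarith [sPhi_lt_two]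
  have h1 : Real.sqrt 5 * (sPhi*u+v) ≤ Real.sqrt 5 * g :=
    mul_le_mul_of_nonneg_left hA (by rw [sS5_eq]; linarith [sPhi_gt_one])
  have h2 : (2-sPhi) * (Real.sqrt 5 * u) ≤ (2-sPhi) * (g - gi) :=
    mul_le_mul_of_nonneg_left hC hc
  have key : Real.sqrt 5 * (2*u+v) = Real.sqrt 5 * (sPhi*u+v) + (2-sPhi)*(Real.sqrt 5 * u) := by
    ring
  have hg : Real.sqrt 5 * g + (2-sPhi)*g = sPhi^2 * g := by
    rw [sS5_eq, sPhi_sq]; ring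
  linarith

/-- the combination step used for n ≡ 3 mod 4 -/
lemma combineBC {u v h ci : ℝ} (hB : u + sPhi*v ≤ h) (hC : Real.sqrt 5 * v ≤ ci) :
    Real.sqrt 5 * (u+2*v) ≤ Real.sqrt 5 * h + (2-sPhi) * ci := by
  have hc : (0:ℝ) ≤ 2 - sPhi := by linarith [sPhi_lt_two]
  have h1 : Real.sqrt 5 * (u+sPhi*v) ≤ Real.sqrt 5 * h :=
    mul_le_mul_of_nonneg_left hB (by rw [sS5_eq]; linarith [sPhi_gt_one])
  have h2 : (2-sPhi) * (Real.sqrt 5 * v) ≤ (2-sPhi) * ci :=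
    mul_le_mul_of_nonneg_left hC hc
  have key : Real.sqrt 5 * (u+2*v) = Real.sqrt 5 * (u+sPhi*v) + (2-sPhi)*(Real.sqrt 5 * v) := by
    ring
  linarith

theorem sternABC (ha0 : a 0 = 0) (ha1 : a 1 = 1) (he : ∀ n, 1 ≤ n → a (2*n) = a n)
    (ho : ∀ n, 1 ≤ n → a (2*n+1) = a n + a (n+1)) (n : ℕ) :
    sPhi * (a n : ℝ) + (a (n+1) : ℝ) ≤ (3*(n:ℝ)+1) ^ sTh ∧
    (a n : ℝ) + sPhi * (a (n+1) : ℝ) ≤ (3*(n:ℝ)+2) ^ sTh ∧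
    Real.sqrt 5 * (a n : ℝ) ≤ (3*(n:ℝ)+1) ^ sTh - (3*(n:ℝ)+1) ^ (-sTh) := by
  induction n using Nat.strong_induction_on with
  | _ n IH =>
  rcases Nat.eq_zero_or_pos n with rfl | hn
  · -- base case n = 0
    have g1 : (3*((0:ℕ):ℝ)+1) = 1 := by norm_num
    have g2 : (3*((0:ℕ):ℝ)+2) = 2 := by norm_num
    refine ⟨?_, ?_, ?_⟩
    · rw [ha0, ha1, g1, Real.one_rpow]; norm_num
    · rw [ha0, ha1, g2, two_rpow_sTh]; norm_num
    · rw [ha0, g1, Real.one_rpow, show (1:ℝ)^(-sTh) = 1 from Real.one_rpow _]; norm_num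
  rcases Nat.even_or_odd n with ⟨m, hm⟩ | ⟨m, hm⟩
  · -- n = 2m, m ≥ 1
    have hm' : n = 2*m := by omega
    subst hm'
    have hm1 : 1 ≤ m := by omega
    have hA := (IH m (by omega)).1
    have hC := (IH m (by omega)).2.2
    have ev : a (2*m) = a m := he m hm1
    have od : a (2*m+1) = a m + a (m+1) := ho m hm1
    have hv1 : (1:ℝ) ≤ (a (m+1) : ℝ) := by
      exact_mod_cast apos ha0 ha1 he ho (m+1) (by omega)
    set u : ℝ := (a m : ℝ) with hu
    set v : ℝ := (a (m+1) : ℝ) with hv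
    have hunn : (0:ℝ) ≤ u := Nat.cast_nonneg _
    -- real forms of the budgets
    have hm7 : (7:ℝ) ≤ 6*(m:ℝ)+1 := by
      have : (1:ℝ) ≤ (m:ℝ) := by exact_mod_cast hm1
      linarith
    have hgpos : (0:ℝ) ≤ 3*(m:ℝ)+1 := by positivity
    have hdou : (2*(3*(m:ℝ)+1)) ^ sTh = sPhi * (3*(m:ℝ)+1) ^ sTh := rpow_double hgpos
    have hL1 : (6*(m:ℝ)+1+1) ^ sTh ≤ (6*(m:ℝ)+1) ^ sTh + (sPhi - 1) := L1 hm7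
    have e1 : (2*(3*(m:ℝ)+1)) = 6*(m:ℝ)+1+1 := by ring
    have hstep : sPhi * (sPhi*u+v) ≤ sPhi * (3*(m:ℝ)+1) ^ sTh :=
      mul_le_mul_of_nonneg_left hA sPhi_pos.le
    constructor
    · -- A at 2m
      have key : sPhi * (a (2*m) : ℝ) + (a (2*m+1) : ℝ)
          = sPhi * (sPhi*u+v) - (sPhi-1)*v := by
        rw [ev, od]
        push_cast
        linear_combination (-(↑(a m) : ℝ)) * sPhi_sq
      rw [key]
      have hvphi : (sPhi-1)*1 ≤ (sPhi-1)*v :=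
        mul_le_mul_of_nonneg_left hv1 (by linarith [sPhi_gt_one])
      have goalcast : (3*((2*m : ℕ):ℝ)+1) = 6*(m:ℝ)+1 := by push_cast; ring
      rw [goalcast]
      rw [e1] at hdou
      linarith
    constructor
    · -- B at 2m
      have key : (a (2*m) : ℝ) + sPhi * (a (2*m+1) : ℝ) = sPhi * (sPhi*u+v) := by
        rw [ev, od]
        push_cast
        linear_combination (-(↑(a m) : ℝ)) * sPhi_sq
      rw [key]
      have goalcast : (3*((2*m : ℕ):ℝ)+2) = 2*(3*(m:ℝ)+1) := by push_cast; ring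
      rw [goalcast, hdou]
      exact hstep
    · -- C at 2m
      have key : Real.sqrt 5 * (a (2*m) : ℝ) = Real.sqrt 5 * u := by rw [ev]
      rw [key]
      have goalcast : (3*((2*m : ℕ):ℝ)+1) = 6*(m:ℝ)+1 := by push_cast; ring
      rw [goalcast]
      have hm0 : (0:ℝ) ≤ (m:ℝ) := Nat.cast_nonneg m
      have hmono := L2 (show (0:ℝ) < 3*(m:ℝ)+1 by linarith)
        (show 3*(m:ℝ)+1 ≤ 6*(m:ℝ)+1 by linarith)
      linarith
  · -- n = 2m+1
    subst hm
    have hA := (IH m (by omega)).1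
    have hB := (IH m (by omega)).2.1
    have od : a (2*m+1) = a m + a (m+1) := ho' ha0 ha1 ho m
    have ev2 : a (2*m+2) = a (m+1) := by
      have : 2*m+2 = 2*(m+1) := by ring
      rw [this, he (m+1) (by omega)]
    set u : ℝ := (a m : ℝ) with hu
    set v : ℝ := (a (m+1) : ℝ) with hv
    have hunn : (0:ℝ) ≤ u := Nat.cast_nonneg _
    have hvnn : (0:ℝ) ≤ v := Nat.cast_nonneg _
    have hhpos : (0:ℝ) ≤ 3*(m:ℝ)+2 := by positivity
    have hdou : (2*(3*(m:ℝ)+2)) ^ sTh = sPhi * (3*(m:ℝ)+2) ^ sTh := rpow_double hhpos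
    have hstep : sPhi * (u+sPhi*v) ≤ sPhi * (3*(m:ℝ)+2) ^ sTh :=
      mul_le_mul_of_nonneg_left hB sPhi_pos.le
    constructor
    · -- A at 2m+1 : φ(u+v) + v = φ(u+φv)
      have key : sPhi * (a (2*m+1) : ℝ) + (a (2*m+2) : ℝ) = sPhi * (u+sPhi*v) := by
        rw [od, ev2]
        push_cast
        linear_combination (-(↑(a (m+1)) : ℝ)) * sPhi_sq
      rw [key]
      have goalcast : (3*((2*m+1 : ℕ):ℝ)+1) = 2*(3*(m:ℝ)+2) := by push_cast; ring
      rw [goalcast, hdou]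
      exact hstep
    constructor
    · -- B at 2m+1 : (u+v) + φv = u+φ²v ≤ φ(u+φv)
      have key : (a (2*m+1) : ℝ) + sPhi * (a (2*m+2) : ℝ) ≤ sPhi * (u+sPhi*v) := by
        rw [od, ev2]
        push_cast
        nlinarith [sPhi_sq, sPhi_gt_one, hunn]
      have goalcast : (3*((2*m+1 : ℕ):ℝ)+2) = 6*(m:ℝ)+5 := by push_cast; ring
      rw [goalcast]
      have hmono : (6*(m:ℝ)+4) ^ sTh ≤ (6*(m:ℝ)+5) ^ sTh :=
        Real.rpow_le_rpow (by positivity) (by linarith) sTh_pos.le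
      have e1 : (2*(3*(m:ℝ)+2)) = 6*(m:ℝ)+4 := by ring
      rw [e1] at hdou
      linarith
    · -- C at 2m+1 : split parity of m
      rcases Nat.even_or_odd m with ⟨k, hk⟩ | ⟨k, hk⟩
      · -- m = 2k, n = 4k+1
        have hk' : m = 2*k := by omega
        subst hk'
        have hAk := (IH k (by omega)).1
        have hCk := (IH k (by omega)).2.2
        have evk : a (2*k) = a k := he' ha0 he k
        have odk : a (2*k+1) = a k + a (k+1) := ho' ha0 ha1 ho k
        have key : (a (2*(2*k)+1) : ℝ) = 2*(a k : ℝ) + (a (k+1) : ℝ) := by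
          rw [od, evk, odk]; push_cast; ring
        rw [key]
        have hcomb := combineAC hAk hCk
        have goalcast : (3*((2*(2*k)+1 : ℕ):ℝ)+1) = 4*(3*(k:ℝ)+1) := by push_cast; ring
        rw [goalcast, rpow_quad (by positivity), rpow_quad_neg (by positivity)]
        linarith
      · -- m = 2k+1, n = 4k+3
        subst hk
        have hBk := (IH k (by omega)).2.1
        have hCk1 := (IH (k+1) (by omega)).2.2
        have odk : a (2*k+1) = a k + a (k+1) := ho' ha0 ha1 ho k
        have evk2 : a (2*k+2) = a (k+1) := by
          have : 2*k+2 = 2*(k+1) := by ring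
          rw [this, he' ha0 he (k+1)]
        have key : (a (2*(2*k+1)+1) : ℝ) = (a k : ℝ) + 2*(a (k+1) : ℝ) := by
          have e2 : 2*(2*k+1)+1 = 2*(2*k+1)+1 := rfl
          rw [od, odk, evk2]; push_cast; ring
        rw [key]
        have hC' : Real.sqrt 5 * (a (k+1) : ℝ)
            ≤ (3*(k:ℝ)+4) ^ sTh - (3*(k:ℝ)+4) ^ (-sTh) := by
          have := hCk1
          have e3 : (3*((k+1 : ℕ):ℝ)+1) = 3*(k:ℝ)+4 := by push_cast; ring
          rwa [e3] at this
        have hcomb := combineBC hBk hC'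
        have hL3 := L3 (show (0:ℝ) ≤ 3*(k:ℝ) by positivity)
        have goalcast : (3*((2*(2*k+1)+1 : ℕ):ℝ)+1) = 4*(3*(k:ℝ))+10 := by push_cast; ring
        rw [goalcast]
        have e4 : (3*(k:ℝ)+2) = 3*(k:ℝ)+2 := rfl
        -- match L3's (t+2), (t+4) with our budgets
        have e5 : Real.sqrt 5 * ((3*(k:ℝ))+2) ^ sTh + (2-sPhi) * ((3*(k:ℝ))+4) ^ sTh
            - (2-sPhi) * ((3*(k:ℝ))+4) ^ (-sTh)
            ≤ (4*(3*(k:ℝ))+10) ^ sTh - (4*(3*(k:ℝ))+10) ^ (-sTh) := hL3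
        have e6 : Real.sqrt 5 * (3*(k:ℝ)+2) ^ sTh
            + (2-sPhi) * ((3*(k:ℝ)+4) ^ sTh - (3*(k:ℝ)+4) ^ (-sTh))
            = Real.sqrt 5 * ((3*(k:ℝ))+2) ^ sTh + (2-sPhi) * ((3*(k:ℝ))+4) ^ sTh
            - (2-sPhi) * ((3*(k:ℝ))+4) ^ (-sTh) := by ring
        linarith
end M4
noncomputable section M5

lemma two_rpow_neg_sTh : (2:ℝ) ^ (-sTh) = sPhi - 1 := by
  rw [Real.rpow_neg (by norm_num), two_rpow_sTh]
  exact inv_eq_of_mul_eq_one_left sPhi_inv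

lemma pow2_rpow (k : ℕ) : ((2:ℝ)^k) ^ sTh = sPhi ^ k := by
  rw [← Real.rpow_natCast 2 k, ← Real.rpow_mul (by norm_num),
    show (k:ℝ) * sTh = sTh * k by ring, Real.rpow_mul (by norm_num),
    two_rpow_sTh, Real.rpow_natCast]

lemma pow2_rpow_neg (k : ℕ) : ((2:ℝ)^k) ^ (-sTh) = (sPhi - 1) ^ k := by
  rw [← Real.rpow_natCast 2 k, ← Real.rpow_mul (by norm_num),
    show (k:ℝ) * -sTh = -sTh * k by ring, Real.rpow_mul (by norm_num),
    two_rpow_neg_sTh, Real.rpow_natCast]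

lemma three_sTh : sPhi ^ Real.logb 2 3 = (3:ℝ) ^ sTh := by
  rw [Real.rpow_def_of_pos sPhi_pos, Real.rpow_def_of_pos (by norm_num : (0:ℝ) < 3)]
  unfold sTh Real.logb
  ring_nf

/-- the sequence (4^(j+1)-1)/3 of alternating binary numbers -/
def sN : ℕ → ℕ
  | 0 => 1
  | j+1 => 4 * sN j + 1

lemma sN_ge (j : ℕ) : j + 1 ≤ sN j := by
  induction j with
  | zero => simp [sN]
  | succ j ih => rw [sN]; omega

lemma sN_pos (j : ℕ) : 1 ≤ sN j := le_trans (by omega) (sN_ge j)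

lemma sN_cast (j : ℕ) : 3 * ((sN j : ℕ):ℝ) + 1 = (2:ℝ) ^ (2*j+2) := by
  induction j with
  | zero => norm_num [sN]
  | succ j ih =>
    rw [sN]
    push_cast
    push_cast at ih
    rw [show 2*(j+1)+2 = (2*j+2)+2 by ring, pow_add]
    nlinarith [ih]

lemma sN_tendsto : Filter.Tendsto sN Filter.atTop Filter.atTop :=
  tendsto_atTop_mono (fun j => le_trans (Nat.le_succ j) (sN_ge j)) Filter.tendsto_id

end M5
noncomputable section M6

lemma hphi3 : sPhi^3 = 2*sPhi+1 := by linear_combination (sPhi+1)*sPhi_sq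
lemma hb3 : (sPhi-1)^3 = 2*(sPhi-1)-1 := by linear_combination (sPhi-2)*sPhi_sq
lemma hb2 : (sPhi-1)^2 = 2-sPhi := by linear_combination sPhi_sq

variable {a : ℕ → ℕ}

lemma sternN (ha0 : a 0 = 0) (ha1 : a 1 = 1) (he : ∀ n, 1 ≤ n → a (2*n) = a n)
    (ho : ∀ n, 1 ≤ n → a (2*n+1) = a n + a (n+1)) (j : ℕ) :
    Real.sqrt 5 * (a (sN j) : ℝ) = sPhi^(2*j+2) - (sPhi-1)^(2*j+2) ∧
    Real.sqrt 5 * (a (sN j + 1) : ℝ) = sPhi^(2*j+1) + (sPhi-1)^(2*j+1) := by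
  induction j with
  | zero =>
    have h2 : a 2 = 1 := by rw [show 2 = 2*1 by norm_num, he 1 (by norm_num), ha1]
    constructor
    · show Real.sqrt 5 * (a 1 : ℝ) = _
      rw [ha1, sS5_eq]; push_cast; ring
    · show Real.sqrt 5 * (a 2 : ℝ) = _
      rw [h2, sS5_eq]; push_cast; ring
  | succ j ih =>
    obtain ⟨hp, hq⟩ := ih
    have hval1 : a (sN (j+1)) = a (sN j) + (a (sN j) + a (sN j + 1)) := by
      show a (4 * sN j + 1) = _
      rw [show 4 * sN j + 1 = 2*(2*sN j)+1 by ring, ho' ha0 ha1 ho (2*sN j),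
        he' ha0 he (sN j), ho' ha0 ha1 ho (sN j)]
    have hval2 : a (sN (j+1) + 1) = a (sN j) + a (sN j + 1) := by
      show a (4 * sN j + 1 + 1) = _
      rw [show 4 * sN j + 1 + 1 = 2*(2*sN j+1) by ring, he' ha0 he (2*sN j+1),
        ho' ha0 ha1 ho (sN j)]
    constructor
    · rw [hval1]
      push_cast
      rw [show 2*(j+1)+2 = (2*j+1)+3 by ring]
      linear_combination 2*hp + hq + (-(sPhi^(2*j+1)))*hphi3 + ((sPhi-1)^(2*j+1))*hb3
    · rw [hval2]
      push_cast
      rw [show 2*(j+1)+1 = (2*j+1)+2 by ring]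
      linear_combination hp + hq + (-(sPhi^(2*j+1)))*sPhi_sq + (-((sPhi-1)^(2*j+1)))*hb2

lemma lower_tendsto (ha0 : a 0 = 0) (ha1 : a 1 = 1) (he : ∀ n, 1 ≤ n → a (2*n) = a n)
    (ho : ∀ n, 1 ≤ n → a (2*n+1) = a n + a (n+1)) :
    Filter.Tendsto (fun j => (a (sN j) : ℝ) / ((sN j : ℕ):ℝ) ^ sTh) Filter.atTop
      (nhds ((3:ℝ)^sTh / Real.sqrt 5)) := by
  have hs5pos : (0:ℝ) < Real.sqrt 5 := sS5_pos
  have key : ∀ j, (a (sN j) : ℝ) / ((sN j : ℕ):ℝ) ^ sTh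
      = ((3+((sN j : ℕ):ℝ)⁻¹)^sTh - ((3*((sN j : ℕ):ℝ)+1)^sTh * ((sN j : ℕ):ℝ)^sTh)⁻¹)
        / Real.sqrt 5 := by
    intro j
    have hN1 : (1:ℝ) ≤ ((sN j : ℕ):ℝ) := by exact_mod_cast sN_pos j
    have hNpos : (0:ℝ) < ((sN j : ℕ):ℝ) := by linarith
    have hGpos : (0:ℝ) < 3*((sN j : ℕ):ℝ)+1 := by linarith
    have e1 : (3*((sN j : ℕ):ℝ)+1)^sTh = sPhi^(2*j+2) := by rw [sN_cast j, pow2_rpow]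
    have e2 : (3*((sN j : ℕ):ℝ)+1)^(-sTh) = (sPhi-1)^(2*j+2) := by
      rw [sN_cast j, pow2_rpow_neg]
    have e3 : Real.sqrt 5 * (a (sN j):ℝ)
        = (3*((sN j : ℕ):ℝ)+1)^sTh - (3*((sN j : ℕ):ℝ)+1)^(-sTh) := by
      rw [e1, e2]; exact (sternN ha0 ha1 he ho j).1
    have e5 : (3*((sN j : ℕ):ℝ)+1)^(-sTh) = ((3*((sN j : ℕ):ℝ)+1)^sTh)⁻¹ :=
      Real.rpow_neg hGpos.le _
    have e4 : (3+((sN j : ℕ):ℝ)⁻¹)^sTh = (3*((sN j : ℕ):ℝ)+1)^sTh/((sN j : ℕ):ℝ)^sTh := by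
      rw [show (3:ℝ)+((sN j : ℕ):ℝ)⁻¹ = (3*((sN j : ℕ):ℝ)+1)/((sN j : ℕ):ℝ) by field_simp,
        Real.div_rpow (by linarith) hNpos.le]
    have hNθ : (0:ℝ) < ((sN j : ℕ):ℝ)^sTh := Real.rpow_pos_of_pos hNpos _
    have hGθ : (0:ℝ) < (3*((sN j : ℕ):ℝ)+1)^sTh := Real.rpow_pos_of_pos hGpos _
    have hNne : ((sN j : ℕ):ℝ)^sTh ≠ 0 := ne_of_gt hNθ
    have hGne : (3*((sN j : ℕ):ℝ)+1)^sTh ≠ 0 := ne_of_gt hGθ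
    have hs5ne : Real.sqrt 5 ≠ 0 := ne_of_gt hs5pos
    have e3' : (a (sN j):ℝ)
        = ((3*((sN j : ℕ):ℝ)+1)^sTh - ((3*((sN j : ℕ):ℝ)+1)^sTh)⁻¹)/Real.sqrt 5 := by
      rw [e5] at e3
      rw [eq_div_iff hs5ne]
      linarith [e3]
    rw [e3', e4]
    field_simp
  rw [funext key]
  have t1 : Filter.Tendsto (fun j => ((sN j : ℕ):ℝ)) Filter.atTop Filter.atTop :=
    tendsto_natCast_atTop_atTop.comp sN_tendsto
  have t2 : Filter.Tendsto (fun j => 3+((sN j : ℕ):ℝ)⁻¹) Filter.atTop (nhds 3) := by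
    have h0 : Filter.Tendsto (fun j => ((sN j : ℕ):ℝ)⁻¹) Filter.atTop (nhds 0) :=
      t1.inv_tendsto_atTop
    simpa using Filter.Tendsto.add tendsto_const_nhds h0
  have t3 : Filter.Tendsto (fun j => (3+((sN j : ℕ):ℝ)⁻¹)^sTh) Filter.atTop
      (nhds ((3:ℝ)^sTh)) :=
    (Real.continuousAt_rpow_const 3 sTh (Or.inl (by norm_num))).tendsto.comp t2
  have t4 : Filter.Tendsto (fun j => (3*((sN j : ℕ):ℝ)+1)^sTh * ((sN j : ℕ):ℝ)^sTh)
      Filter.atTop Filter.atTop := by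
    apply Filter.Tendsto.atTop_mul_atTop₀
    · exact (tendsto_rpow_atTop sTh_pos).comp
        (Filter.tendsto_atTop_add_const_right _ 1 (t1.const_mul_atTop (by norm_num : (0:ℝ) < 3)))
    · exact (tendsto_rpow_atTop sTh_pos).comp t1
  have t5 : Filter.Tendsto
      (fun j => ((3*((sN j : ℕ):ℝ)+1)^sTh * ((sN j : ℕ):ℝ)^sTh)⁻¹) Filter.atTop (nhds 0) :=
    t4.inv_tendsto_atTop
  have := (t3.sub t5).div_const (Real.sqrt 5)
  simpa using this

end M6
noncomputable section M7

variable {a : ℕ → ℕ}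

theorem sternMain (ha0 : a 0 = 0) (ha1 : a 1 = 1) (he : ∀ n, 1 ≤ n → a (2*n) = a n)
    (ho : ∀ n, 1 ≤ n → a (2*n+1) = a n + a (n+1)) :
    Filter.limsup (fun n : ℕ => (a n : ℝ) / (n : ℝ) ^ sTh) Filter.atTop
      = (3:ℝ)^sTh / Real.sqrt 5 := by
  have hs5pos : (0:ℝ) < Real.sqrt 5 := sS5_pos
  set f : ℕ → ℝ := fun n : ℕ => (a n : ℝ) / (n : ℝ) ^ sTh with hf
  set b : ℕ → ℝ := fun n : ℕ => (3 + (n:ℝ)⁻¹) ^ sTh / Real.sqrt 5 with hb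
  set L : ℝ := (3:ℝ)^sTh / Real.sqrt 5 with hL
  -- f is eventually below b
  have hub : f ≤ᶠ[Filter.atTop] b := by
    rw [Filter.EventuallyLE, Filter.eventually_atTop]
    refine ⟨1, fun n hn => ?_⟩
    have hN1 : (1:ℝ) ≤ (n:ℝ) := by exact_mod_cast hn
    have hNpos : (0:ℝ) < (n:ℝ) := by linarith
    have hGpos : (0:ℝ) < 3*(n:ℝ)+1 := by linarith
    have hNθ : (0:ℝ) < (n:ℝ)^sTh := Real.rpow_pos_of_pos hNpos _
    have hC := (sternABC ha0 ha1 he ho n).2.2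
    have hGineg : (0:ℝ) < (3*(n:ℝ)+1)^(-sTh) := Real.rpow_pos_of_pos hGpos _
    have hC' : Real.sqrt 5 * (a n : ℝ) ≤ (3*(n:ℝ)+1)^sTh := by linarith
    have e4 : (3+(n:ℝ)⁻¹)^sTh = (3*(n:ℝ)+1)^sTh/(n:ℝ)^sTh := by
      rw [show (3:ℝ)+(n:ℝ)⁻¹ = (3*(n:ℝ)+1)/(n:ℝ) by field_simp,
        Real.div_rpow (by linarith) hNpos.le]
    show (a n : ℝ) / (n : ℝ) ^ sTh ≤ (3 + (n:ℝ)⁻¹) ^ sTh / Real.sqrt 5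
    rw [e4, div_le_div_iff₀ hNθ hs5pos, div_mul_eq_mul_div, le_div_iff₀ hNθ]
    calc (a n : ℝ) * Real.sqrt 5 * (n:ℝ)^sTh
        ≤ (3*(n:ℝ)+1)^sTh * (n:ℝ)^sTh := by nlinarith [hC', hNθ]
      _ = (3*(n:ℝ)+1)^sTh * (n:ℝ)^sTh := rfl
  -- b tends to L
  have t1 : Filter.Tendsto (fun n : ℕ => (n:ℝ)) Filter.atTop Filter.atTop :=
    tendsto_natCast_atTop_atTop
  have t2 : Filter.Tendsto (fun n : ℕ => 3+(n:ℝ)⁻¹) Filter.atTop (nhds 3) := by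
    have h0 : Filter.Tendsto (fun n : ℕ => (n:ℝ)⁻¹) Filter.atTop (nhds 0) :=
      t1.inv_tendsto_atTop
    simpa using Filter.Tendsto.add tendsto_const_nhds h0
  have t3 : Filter.Tendsto (fun n : ℕ => (3+(n:ℝ)⁻¹)^sTh) Filter.atTop
      (nhds ((3:ℝ)^sTh)) :=
    (Real.continuousAt_rpow_const 3 sTh (Or.inl (by norm_num))).tendsto.comp t2
  have hbt : Filter.Tendsto b Filter.atTop (nhds L) := t3.div_const _
  -- boundedness facts
  have hfge : Filter.IsBoundedUnder (· ≥ ·) Filter.atTop f :=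
    Filter.isBoundedUnder_of ⟨0, fun n => by positivity⟩
  have hbbd : Filter.IsBoundedUnder (· ≤ ·) Filter.atTop b := hbt.isBoundedUnder_le
  have hfbd : Filter.IsBoundedUnder (· ≤ ·) Filter.atTop f := hbbd.mono_le hub
  -- upper bound
  have h1 : Filter.limsup f Filter.atTop ≤ Filter.limsup b Filter.atTop :=
    Filter.limsup_le_limsup hub hfge.isCoboundedUnder_le hbbd
  have h2 : Filter.limsup b Filter.atTop = L := hbt.limsup_eq
  -- lower bound
  have hlow : Filter.Tendsto (fun j => f (sN j)) Filter.atTop (nhds L) :=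
    lower_tendsto ha0 ha1 he ho
  have h4 : L ≤ Filter.limsup f Filter.atTop := by
    apply le_of_forall_pos_le_add
    intro ε hε
    have hfreq : ∃ᶠ n in Filter.atTop, L - ε ≤ f n := by
      apply sN_tendsto.frequently
      exact (hlow.eventually (eventually_ge_nhds (by linarith : L - ε < L))).frequently
    have := Filter.le_limsup_of_frequently_le hfreq hfbd
    linarith
  have := le_antisymm (le_trans h1 (le_of_eq h2)) h4
  rw [this]

end M7

/-- Stern's diatomic sequence is characterized by `a 0 = 0`, `a 1 = 1`, and for `n ≥ 1`,
`a (2n) = a n` and `a (2n+1) = a n + a (n+1)`. With `φ = (1+√5)/2` the golden ratio,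
`limsup_{n→∞} a(n) / n^{log₂ φ} = φ^{log₂ 3} / √5`. -/
theorem stern_maximal_order
    (a : ℕ → ℕ) (ha0 : a 0 = 0) (ha1 : a 1 = 1)
    (haeven : ∀ n, 1 ≤ n → a (2 * n) = a n)
    (haodd : ∀ n, 1 ≤ n → a (2 * n + 1) = a n + a (n + 1)) :
    Filter.limsup
        (fun n : ℕ => (a n : ℝ) / (n : ℝ) ^ (Real.logb 2 ((1 + Real.sqrt 5) / 2)))
        Filter.atTop
      = ((1 + Real.sqrt 5) / 2) ^ (Real.logb 2 3) / Real.sqrt 5 := by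
  have h := sternMain ha0 ha1 haeven haodd
  have e1 : ((1 + Real.sqrt 5) / 2) ^ (Real.logb 2 3) = (3:ℝ)^sTh := three_sTh
  have e2 : Real.logb 2 ((1 + Real.sqrt 5) / 2) = sTh := rfl
  rw [e1, e2]
  exact h
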